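/- Let R be an algebraic Kähler curvature tensor on a complex Hermitian vector space V with dim V = m ≥ 2 and suppose the unit vector Z minimizes H(W) = R(W,W̄,W,W̄) over unit vectors W. Then H(Z) ≤ (2/(m−1)) · Ric⊥(Z,Z̄), where Ric⊥(Z,Z̄) = Σ_{j=2}^{m} R(Z,Z̄,E_j,Ē_j) for any orthonormal basis {E_1 = Z, E_2, …, E_m} of V. -/

import Mathlib

open Complex Finset Filter

set_option maxHeartbeats 1000000

local notation "⟪" x ", " y "⟫" => @inner ℂ _ _ x y

lemma quartic_coeff_nonneg (a b c d : ℝ)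
    (h : ∀ x : ℝ, 0 ≤ a*x + b*x^2 + c*x^3 + d*x^4) : 0 ≤ b := by
  have key : ∀ x : ℝ, 0 < x → 0 ≤ b + d * x^2 := by
    intro x hx
    nlinarith [h x, h (-x), mul_pos hx hx]
  have h1 : Tendsto (fun x : ℝ => b + d * x^2) (nhdsWithin 0 (Set.Ioi 0)) (nhds b) := by
    have hc : Continuous fun x : ℝ => b + d * x^2 := by continuity
    have h0 := hc.tendsto 0
    simp only [zero_pow, mul_zero, add_zero, ne_eq, OfNat.ofNat_ne_zero,
      not_false_eq_true] at h0
    exact h0.mono_left nhdsWithin_le_nhds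
  exact ge_of_tendsto h1 (by filter_upwards [self_mem_nhdsWithin] with x hx using key x hx)

lemma keyW {V : Type*} [NormedAddCommGroup V] [InnerProductSpace ℂ V]
    (R : V → V → V → V → ℂ)
    (hlin1 : ∀ (a b : ℂ) (z z' w x y : V),
      R (a • z + b • z') w x y = a * R z w x y + b * R z' w x y)
    (hlin3 : ∀ (a b : ℂ) (z w x x' y : V),
      R z w (a • x + b • x') y = a * R z w x y + b * R z w x' y)
    (hconj2 : ∀ (a b : ℂ) (z w w' x y : V),
      R z (a • w + b • w') x y
        = (starRingEnd ℂ a) * R z w x y + (starRingEnd ℂ b) * R z w' x y)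
    (hconj4 : ∀ (a b : ℂ) (z w x y y' : V),
      R z w x (a • y + b • y')
        = (starRingEnd ℂ a) * R z w x y + (starRingEnd ℂ b) * R z w x y')
    (hpair : ∀ z w x y : V, R z w x y = R x y z w)
    (hsym13 : ∀ z w x y : V, R z w x y = R x w z y)
    (Z : V) (hZ : ‖Z‖ = 1)
    (hmin : ∀ W : V, ‖W‖ = 1 → (R Z Z Z Z).re ≤ (R W W W W).re)
    (W : V) (hW : ‖W‖ = 1) (horth : ⟪Z, W⟫ = 0) :
    (R Z Z Z Z).re ≤ 2 * (R Z Z W W).re := by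
  -- single-slot scaling
  have e1 : ∀ (c : ℂ) (v w x y : V), R (c • v) w x y = c * R v w x y := by
    intro c v w x y
    have := hlin1 c 0 v 0 w x y; simpa using this
  have e2 : ∀ (c : ℂ) (z v x y : V), R z (c • v) x y = starRingEnd ℂ c * R z v x y := by
    intro c z v x y
    have := hconj2 c 0 z v 0 x y; simpa using this
  have e3 : ∀ (c : ℂ) (z w v y : V), R z w (c • v) y = c * R z w v y := by
    intro c z w v y
    have := hlin3 c 0 z w v 0 y; simpa using this
  have e4 : ∀ (c : ℂ) (z w x v : V), R z w x (c • v) = starRingEnd ℂ c * R z w x v := by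
    intro c z w x v
    have := hconj4 c 0 z w x v 0; simpa using this
  -- expansion
  have hex : ∀ t : ℂ, R (Z + t•W) (Z + t•W) (Z + t•W) (Z + t•W) =
      R Z Z Z Z
      + t * (R W Z Z Z + R Z Z W Z)
      + (starRingEnd ℂ t) * (R Z W Z Z + R Z Z Z W)
      + t^2 * R W Z W Z + (starRingEnd ℂ t)^2 * R Z W Z W
      + t * starRingEnd ℂ t * (R W W Z Z + R W Z Z W + R Z W W Z + R Z Z W W)
      + t^2 * starRingEnd ℂ t * (R W W W Z + R W Z W W)
      + t * (starRingEnd ℂ t)^2 * (R W W Z W + R Z W W W)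
      + t^2 * (starRingEnd ℂ t)^2 * R W W W W := by
    intro t
    have h1 : Z + t•W = (1:ℂ)•Z + t•W := by simp
    rw [h1]
    simp only [hlin1, hconj2, hlin3, hconj4, map_one]
    ring
  -- norm
  have hnorm : ∀ t : ℂ, ‖Z + t•W‖^2 = 1 + ‖t‖ ^ 2 := by
    intro t
    rw [@norm_add_sq ℂ]
    rw [inner_smul_right, horth, mul_zero, norm_smul, hZ, hW]
    simp
  -- minimality in scale-invariant form
  have hmin' : ∀ t : ℂ, (R Z Z Z Z).re * (1 + ‖t‖ ^ 2)^2
      ≤ (R (Z + t•W) (Z + t•W) (Z + t•W) (Z + t•W)).re := by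
    intro t
    set v := Z + t•W with hv
    have hn2 : ‖v‖^2 = 1 + ‖t‖ ^ 2 := hnorm t
    have hnpos : (0:ℝ) < ‖v‖ := by
      nlinarith [norm_nonneg v, norm_nonneg t, sq_nonneg (‖t‖)]
    set c : ℂ := ((‖v‖⁻¹ : ℝ) : ℂ) with hc
    have hu : ‖c • v‖ = 1 := by
      rw [norm_smul, hc]
      simp [abs_of_pos (inv_pos.mpr hnpos), inv_mul_cancel₀ (ne_of_gt hnpos)]
    have h1 := hmin (c • v) hu
    have hsc : R (c•v) (c•v) (c•v) (c•v)
        = ((‖v‖⁻¹^4 : ℝ) : ℂ) * R v v v v := by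
      rw [e1, e2, e3, e4, hc, Complex.conj_ofReal]
      push_cast
      ring
    rw [hsc] at h1
    rw [Complex.re_ofReal_mul] at h1
    have h4 : ‖v‖^4 = (1 + ‖t‖ ^ 2)^2 := by
      rw [← hn2]; ring
    rw [← h4]
    have hv4 : (0:ℝ) < ‖v‖^4 := by positivity
    calc (R Z Z Z Z).re * ‖v‖^4 ≤ (‖v‖⁻¹^4 * (R v v v v).re) * ‖v‖^4 := by
          nlinarith
      _ = (R v v v v).re := by
          field_simp
  set A : ℝ := (R Z Z Z Z).re with hA
  -- real direction : t = x
  have habs1 : ∀ x : ℝ, ‖(x:ℂ)‖ ^ 2 = x^2 := by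
    intro x; rw [Complex.norm_real, Real.norm_eq_abs, _root_.sq_abs]
  have habsI : ∀ x : ℝ, ‖(x:ℂ) * I‖ ^ 2 = x^2 := by
    intro x; rw [norm_mul, Complex.norm_I, Complex.norm_real, Real.norm_eq_abs, mul_one, _root_.sq_abs]
  set r1 : ℝ := (R W Z Z Z + R Z Z W Z + R Z W Z Z + R Z Z Z W).re with hr1
  set r2 : ℝ := (R W Z W Z + R Z W Z W
      + (R W W Z Z + R W Z Z W + R Z W W Z + R Z Z W W)).re with hr2
  set r3 : ℝ := (R W W W Z + R W Z W W + R W W Z W + R Z W W W).re with hr3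
  set r4 : ℝ := (R W W W W).re with hr4
  have hq1 : ∀ x : ℝ, 0 ≤ r1 * x + (r2 - 2*A) * x^2 + r3 * x^3 + (r4 - A) * x^4 := by
    intro x
    have hle := hmin' (x : ℂ)
    rw [hex, habs1] at hle
    simp only [Complex.conj_ofReal] at hle
    simp only [hr1, hr2, hr3, hr4, hA, Complex.add_re, Complex.mul_re, Complex.mul_im,
      ← Complex.ofReal_pow, Complex.ofReal_re, Complex.ofReal_im,
      Complex.add_im] at hle ⊢
    linarith [hle]
  set s1 : ℝ := (I * (R W Z Z Z + R Z Z W Z) - I * (R Z W Z Z + R Z Z Z W)).re with hs1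
  set s2 : ℝ := (-(R W Z W Z) - R Z W Z W
      + (R W W Z Z + R W Z Z W + R Z W W Z + R Z Z W W)).re with hs2
  set s3 : ℝ := (I * (R W W W Z + R W Z W W) - I * (R W W Z W + R Z W W W)).re with hs3
  have hq2 : ∀ x : ℝ, 0 ≤ s1 * x + (s2 - 2*A) * x^2 + s3 * x^3 + (r4 - A) * x^4 := by
    intro x
    have hle := hmin' ((x : ℂ) * I)
    rw [hex, habsI] at hle
    simp only [map_mul, Complex.conj_ofReal, Complex.conj_I] at hle
    simp only [mul_pow, neg_sq, Complex.I_sq, Complex.one_re, Complex.one_im,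
      hs1, hs2, hs3, hr4, hA, Complex.add_re, Complex.mul_re, Complex.mul_im,
      Complex.sub_re, Complex.sub_im, Complex.neg_re, Complex.neg_im,
      ← Complex.ofReal_pow, Complex.ofReal_re, Complex.ofReal_im,
      Complex.I_re, Complex.I_im, Complex.add_im] at hle ⊢
    linarith [hle]
  have hb1 : 0 ≤ r2 - 2*A := quartic_coeff_nonneg _ _ _ _ hq1
  have hb2 : 0 ≤ s2 - 2*A := quartic_coeff_nonneg _ _ _ _ hq2
  -- symmetries: all four mixed terms equal R Z Z W W
  have hB1 : R W W Z Z = R Z Z W W := hpair _ _ _ _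
  have hB2 : R W Z Z W = R Z Z W W := hsym13 _ _ _ _
  have hB3 : R Z W W Z = R W W Z Z := hsym13 _ _ _ _
  have hrs : r2 + s2 = 8 * (R Z Z W W).re := by
    rw [hr2, hs2, hB1, hB2, hB3, hB1]
    simp only [Complex.add_re, Complex.sub_re, Complex.neg_re]
    ring
  linarith


/-- if a unit vector `Z` minimizes the holomorphic sectional
curvature, then `H(Z) ≤ (2/(m-1)) Ric⊥(Z,Z̄)`. -/
theorem stmt_2 {V : Type*} [NormedAddCommGroup V] [InnerProductSpace ℂ V]
    (m : ℕ) (hm : 2 ≤ m)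
    (R : V → V → V → V → ℂ)
    (hlin1 : ∀ (a b : ℂ) (z z' w x y : V),
      R (a • z + b • z') w x y = a * R z w x y + b * R z' w x y)
    (hlin3 : ∀ (a b : ℂ) (z w x x' y : V),
      R z w (a • x + b • x') y = a * R z w x y + b * R z w x' y)
    (hconj2 : ∀ (a b : ℂ) (z w w' x y : V),
      R z (a • w + b • w') x y
        = (starRingEnd ℂ a) * R z w x y + (starRingEnd ℂ b) * R z w' x y)
    (hconj4 : ∀ (a b : ℂ) (z w x y y' : V),
      R z w x (a • y + b • y')
        = (starRingEnd ℂ a) * R z w x y + (starRingEnd ℂ b) * R z w x y')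
    (hpair : ∀ z w x y : V, R z w x y = R x y z w)
    (hsym13 : ∀ z w x y : V, R z w x y = R x w z y)
    (hreal : ∀ v w : V, (R v v w w).im = 0)
    (Z : V) (hZ : ‖Z‖ = 1)
    (hmin : ∀ W : V, ‖W‖ = 1 → (R Z Z Z Z).re ≤ (R W W W W).re)
    (E : OrthonormalBasis (Fin m) ℂ V) (hE0 : E ⟨0, by omega⟩ = Z) :
    (R Z Z Z Z).re
      ≤ (2 / (m - 1 : ℝ)) * ∑ j ∈ Finset.univ \ {(⟨0, by omega⟩ : Fin m)},
          (R Z Z (E j) (E j)).re := by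
  set z0 : Fin m := ⟨0, by omega⟩ with hz0
  have hterm : ∀ j ∈ Finset.univ \ {z0},
      (R Z Z Z Z).re ≤ 2 * (R Z Z (E j) (E j)).re := by
    intro j hj
    rw [Finset.mem_sdiff, Finset.mem_singleton] at hj
    have hne : z0 ≠ j := fun h => hj.2 h.symm
    exact keyW R hlin1 hlin3 hconj2 hconj4 hpair hsym13 Z hZ hmin (E j)
      (E.orthonormal.1 j) (by rw [← hE0]; exact E.orthonormal.2 hne)
  have hsum := Finset.sum_le_sum hterm
  rw [Finset.sum_const] at hsum
  have hcard : (Finset.univ \ {z0}).card = m - 1 := by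
    rw [Finset.card_sdiff_of_subset (Finset.subset_univ _), Finset.card_singleton,
      Finset.card_univ, Fintype.card_fin]
  rw [hcard, nsmul_eq_mul] at hsum
  have hcast : ((m - 1 : ℕ) : ℝ) = (m : ℝ) - 1 := by
    have h1 : 1 ≤ m := by omega
    push_cast [Nat.cast_sub h1]
    ring
  rw [hcast] at hsum
  have hpos : (0:ℝ) < (m : ℝ) - 1 := by
    have : (2:ℝ) ≤ (m : ℝ) := by exact_mod_cast hm
    linarith
  rw [div_mul_eq_mul_div, le_div_iff₀ hpos]
  have hsum2 : ∑ j ∈ Finset.univ \ {z0}, 2 * (R Z Z (E j) (E j)).re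
      = 2 * ∑ j ∈ Finset.univ \ {z0}, (R Z Z (E j) (E j)).re := by
    rw [Finset.mul_sum]
  rw [hsum2] at hsum
  nlinarith [hsum]
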